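/- Let G be a graph on n vertices that is U(d,d)-free (contains no pair of disjoint vertex sets inducing a bipartite copy of U(d,d)). Then the family of rows of the adjacency matrix of G, viewed as binary vectors of length n, has primal shatter function g(t) ≤ 10·t^d for all t > d. -/

import Mathlib

/-- `G` contains an induced bipartite copy of `U(k,d)` between two disjoint vertex sets. -/
def ContainsU {V : Type*} (G : SimpleGraph V) (k d : ℕ) : Prop :=
  ∃ (a : Fin d ↪ V) (b : Finset (Fin d) × Fin k ↪ V),
    (∀ i p, a i ≠ b p) ∧ ∀ (i : Fin d) (p : Finset (Fin d) × Fin k),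
      (G.Adj (a i) (b p) ↔ i ∈ p.1)


lemma fact_le_aux : ∀ (d i : ℕ), i ≤ d → d.factorial ≤ i.factorial * d ^ (d - i) := by
  intro d
  induction d with
  | zero => intro i hi; interval_cases i; simp
  | succ e ih =>
    intro i hi
    rcases Nat.eq_or_lt_of_le hi with h | h
    · subst h; simp
    · have hi' : i ≤ e := Nat.lt_succ_iff.mp h
      have h1 : (e+1).factorial = (e+1) * e.factorial := rfl
      have h2 : e.factorial ≤ i.factorial * e ^ (e - i) := ih i hi'
      have h3 : e ^ (e - i) ≤ (e+1) ^ (e - i) := Nat.pow_le_pow_left (by omega) _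
      have h4 : e + 1 - i = (e - i) + 1 := by omega
      calc (e+1).factorial = (e+1) * e.factorial := h1
        _ ≤ (e+1) * (i.factorial * e ^ (e - i)) := Nat.mul_le_mul_left _ h2
        _ ≤ (e+1) * (i.factorial * (e+1) ^ (e - i)) := by
            exact Nat.mul_le_mul_left _ (Nat.mul_le_mul_left _ h3)
        _ = i.factorial * (e+1) ^ ((e - i) + 1) := by ring
        _ = i.factorial * (e+1) ^ (e + 1 - i) := by rw [h4]

lemma term_le (t d i : ℕ) (hd : d ≤ t) (hi : i ≤ d) : d.factorial * t.choose i ≤ t ^ d := by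
  calc d.factorial * t.choose i ≤ (i.factorial * d ^ (d - i)) * t.choose i :=
        Nat.mul_le_mul_right _ (fact_le_aux d i hi)
    _ = d ^ (d - i) * (i.factorial * t.choose i) := by ring
    _ = d ^ (d - i) * t.descFactorial i := by rw [Nat.descFactorial_eq_factorial_mul_choose]
    _ ≤ t ^ (d - i) * t ^ i :=
        Nat.mul_le_mul (Nat.pow_le_pow_left hd _) (Nat.descFactorial_le_pow t i)
    _ = t ^ (d - i + i) := (pow_add t _ _).symm
    _ = t ^ d := by rw [Nat.sub_add_cancel hi]

lemma small2 : ∀ e : ℕ, (2*(e+2) - 1) * ((e+2)+1) ≤ 10 * (e+2).factorial := by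
  intro e
  induction e with
  | zero => norm_num [Nat.factorial]
  | succ f ih =>
    have h1 : 10 * (f+3).factorial = (f+3) * (10 * (f+2).factorial) := by
      rw [Nat.factorial_succ]; ring
    have h2 : (f+3) * ((2*(f+2)-1) * ((f+2)+1)) ≤ (f+3) * (10 * (f+2).factorial) :=
      Nat.mul_le_mul_left _ ih
    have h3 : (2*(f+2)-1) = 2*f+3 := by omega
    have h4 : (2*(f+3)-1) = 2*f+5 := by omega
    rw [h4]; rw [h3] at h2
    calc (2*f+5) * ((f+3)+1) ≤ (f+3) * ((2*f+3) * ((f+2)+1)) := by nlinarith [sq_nonneg f, Nat.zero_le f]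
      _ ≤ (f+3) * (10 * (f+2).factorial) := h2
      _ = 10 * (f+3).factorial := h1.symm

lemma small (d : ℕ) (hd : 1 ≤ d) : (2*d - 1) * (d+1) ≤ 10 * d.factorial := by
  match d, hd with
  | 1, _ => norm_num [Nat.factorial]
  | (e+2), _ => exact small2 e

lemma arith (d t : ℕ) (hd : 1 ≤ d) (ht : d < t) :
    (2*d - 1) * ∑ i ∈ Finset.range (d+1), t.choose i ≤ 10 * t ^ d := by
  have h1 : d.factorial * ∑ i ∈ Finset.range (d+1), t.choose i ≤ (d+1) * t ^ d := by
    rw [Finset.mul_sum]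
    calc ∑ i ∈ Finset.range (d+1), d.factorial * t.choose i
        ≤ ∑ _i ∈ Finset.range (d+1), t ^ d := by
          apply Finset.sum_le_sum
          intro i hi
          exact term_le t d i (le_of_lt ht) (Nat.lt_succ_iff.mp (Finset.mem_range.mp hi))
      _ = (d+1) * t ^ d := by simp [Finset.sum_const, Finset.card_range]
  have h2 : (2*d - 1) * (d+1) ≤ 10 * d.factorial := small d hd
  apply Nat.le_of_mul_le_mul_left _ (Nat.factorial_pos d)
  calc d.factorial * ((2*d-1) * ∑ i ∈ Finset.range (d+1), t.choose i)
      = (2*d-1) * (d.factorial * ∑ i ∈ Finset.range (d+1), t.choose i) := by ring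
    _ ≤ (2*d-1) * ((d+1) * t ^ d) := Nat.mul_le_mul_left _ h1
    _ = ((2*d-1) * (d+1)) * t ^ d := by ring
    _ ≤ (10 * d.factorial) * t ^ d := Nat.mul_le_mul_right _ h2
    _ = d.factorial * (10 * t ^ d) := by ring

lemma sum_choose_succ (t d : ℕ) :
    ∑ i ∈ Finset.range (d+1), (t+1).choose i
      = ∑ i ∈ Finset.range (d+1), t.choose i + ∑ i ∈ Finset.range d, t.choose i := by
  induction d with
  | zero => simp
  | succ e ih =>
    rw [Finset.sum_range_succ, ih, Finset.sum_range_succ (f := fun i => (t).choose i) (n := e+1),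
      Finset.sum_range_succ (f := fun i => (t).choose i) (n := e), Nat.choose_succ_succ]
    simp only [Nat.succ_eq_add_one]
    omega

lemma sauer_mult (n m : ℕ) (hm : 2 ≤ m) :
    ∀ (t d : ℕ) (I : Finset (Fin n)), I.card = t →
    ∀ F : Finset (Fin n → Bool), (∀ f ∈ F, ∀ x, x ∉ I → f x = false) →
    (∀ D ⊆ I, D.card = d → ∃ S ⊆ D,
      (F.filter (fun f => ∀ x ∈ D, f x = decide (x ∈ S))).card < m) →
    F.card ≤ (m - 1) * ∑ i ∈ Finset.range (d+1), t.choose i := by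
  intro t
  induction t with
  | zero =>
    intro d I hI F hsupp _
    have hIe : I = ∅ := Finset.card_eq_zero.mp hI
    have hF1 : F.card ≤ 1 := by
      apply Finset.card_le_one.mpr
      intro a ha b hb
      funext x
      rw [hsupp a ha x (by simp [hIe]), hsupp b hb x (by simp [hIe])]
    have : 1 ≤ ∑ i ∈ Finset.range (d+1), (0:ℕ).choose i := by
      have : 0 ∈ Finset.range (d+1) := by simp
      calc 1 = (0:ℕ).choose 0 := rfl
        _ ≤ _ := Finset.single_le_sum (f := fun i => (0:ℕ).choose i) (fun _ _ => Nat.zero_le _) this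
    calc F.card ≤ 1 := hF1
      _ ≤ (m-1) * 1 := by omega
      _ ≤ (m-1) * ∑ i ∈ Finset.range (d+1), (0:ℕ).choose i := Nat.mul_le_mul_left _ this
  | succ t ih =>
    intro d I hI F hsupp hns
    match d with
    | 0 =>
      obtain ⟨S, hS, hlt⟩ := hns ∅ (Finset.empty_subset _) rfl
      have hfe : F.filter (fun f => ∀ x ∈ (∅ : Finset (Fin n)), f x = decide (x ∈ S)) = F := by
        apply Finset.filter_true_of_mem; intro f _ x hx; exact absurd hx (Finset.notMem_empty x)
      rw [hfe] at hlt
      have : 1 ≤ ∑ i ∈ Finset.range 1, (t+1).choose i := by simp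
      calc F.card ≤ m - 1 := by omega
        _ = (m-1) * 1 := by omega
        _ ≤ _ := Nat.mul_le_mul_left _ this
    | (e+1) =>
      -- pick x ∈ I
      obtain ⟨x, hx⟩ := Finset.card_pos.mp (by omega : 0 < I.card)
      set I' := I.erase x with hI'def
      have hI' : I'.card = t := by
        rw [hI'def, Finset.card_erase_of_mem hx, hI]
        omega
      set res : (Fin n → Bool) → (Fin n → Bool) := fun f => Function.update f x false with hres
      have hresval : ∀ f y, y ≠ x → res f y = f y := by
        intro f y hy; simp [hres, Function.update_of_ne hy]
      have hresx : ∀ f, res f x = true → False := by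
        intro f h; simp [hres] at h
      set F0 : Finset (Fin n → Bool) := F.filter (fun f => f x = false) with hF0
      set F1 : Finset (Fin n → Bool) := F.filter (fun f => f x = true) with hF1
      have hresF0 : ∀ f ∈ F0, res f = f := by
        intro f hf
        rw [hF0, Finset.mem_filter] at hf
        funext y
        by_cases hy : y = x
        · subst hy; simp [hres, hf.2]
        · exact hresval f y hy
      have hF0id : F0.image res = F0 := by
        calc F0.image res = F0.image id :=
              Finset.image_congr (fun f hf => hresF0 f (by simpa using hf))
          _ = F0 := Finset.image_id
      have hFsplit : F = F0 ∪ F1 := by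
        rw [hF0, hF1]
        ext f
        simp only [Finset.mem_union, Finset.mem_filter]
        constructor
        · intro hf
          rcases Bool.eq_false_or_eq_true (f x) with h | h
          · exact Or.inr ⟨hf, h⟩
          · exact Or.inl ⟨hf, h⟩
        · rintro (⟨hf, _⟩ | ⟨hf, _⟩) <;> exact hf
      have hdisj : Disjoint F0 F1 := by
        rw [Finset.disjoint_left]
        intro f hf0 hf1
        rw [hF0, Finset.mem_filter] at hf0
        rw [hF1, Finset.mem_filter] at hf1
        rw [hf0.2] at hf1
        exact absurd hf1.2 (by simp)
      have hcardsplit : F.card = F0.card + F1.card := by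
        rw [hFsplit]; exact Finset.card_union_of_disjoint hdisj
      -- res is injective on F1
      have hinj1 : Set.InjOn res F1 := by
        intro f hf g hg hfg
        simp only [Finset.coe_filter, Set.mem_setOf_eq, hF1] at hf hg
        funext y
        by_cases hy : y = x
        · subst hy; rw [hf.2, hg.2]
        · have := congrFun hfg y
          rwa [hresval f y hy, hresval g y hy] at this
      set F' : Finset (Fin n → Bool) := F.image res with hF'
      set Gm : Finset (Fin n → Bool) := F0 ∩ F1.image res with hGm
      have hcardkey : F'.card + Gm.card = F.card := by
        have h1 : F' = F0 ∪ F1.image res := by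
          rw [hF', hFsplit, Finset.image_union, hF0id]
        rw [h1, hGm, Finset.card_union_add_card_inter, Finset.card_image_of_injOn hinj1,
          hcardsplit]
      -- support conditions
      have hsuppF' : ∀ f ∈ F', ∀ y, y ∉ I' → f y = false := by
        intro f hf y hy
        rw [hF', Finset.mem_image] at hf
        obtain ⟨g, hg, rfl⟩ := hf
        by_cases hyx : y = x
        · subst hyx; simp [hres]
        · have hyI : y ∉ I := by
            intro hyI; exact hy (Finset.mem_erase.mpr ⟨hyx, hyI⟩)
          rw [hresval g y hyx]
          exact hsupp g hg y hyI
      have hGmF0 : Gm ⊆ F0 := by rw [hGm]; exact Finset.inter_subset_left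
      have hsuppGm : ∀ f ∈ Gm, ∀ y, y ∉ I' → f y = false := by
        intro f hf y hy
        have hf0 : f ∈ F0 := hGmF0 hf
        rw [hF0, Finset.mem_filter] at hf0
        by_cases hyx : y = x
        · subst hyx; exact hf0.2
        · have hyI : y ∉ I := by
            intro hyI; exact hy (Finset.mem_erase.mpr ⟨hyx, hyI⟩)
          exact hsupp f hf0.1 y hyI
      -- no shattering for F'
      have hnsF' : ∀ D ⊆ I', D.card = e + 1 → ∃ S ⊆ D,
          (F'.filter (fun f => ∀ y ∈ D, f y = decide (y ∈ S))).card < m := by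
        intro D hD hDc
        obtain ⟨S, hS, hlt⟩ := hns D (hD.trans (Finset.erase_subset x I)) hDc
        refine ⟨S, hS, lt_of_le_of_lt ?_ hlt⟩
        have hsub : F'.filter (fun f => ∀ y ∈ D, f y = decide (y ∈ S)) ⊆
            (F.filter (fun f => ∀ y ∈ D, f y = decide (y ∈ S))).image res := by
          intro g hg
          rw [Finset.mem_filter] at hg
          obtain ⟨hgF', hgP⟩ := hg
          rw [hF', Finset.mem_image] at hgF'
          obtain ⟨f, hf, rfl⟩ := hgF'
          apply Finset.mem_image_of_mem
          rw [Finset.mem_filter]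
          refine ⟨hf, ?_⟩
          intro y hy
          have hyx : y ≠ x := (Finset.mem_erase.mp (hD hy)).1
          rw [← hresval f y hyx]
          exact hgP y hy
        exact (Finset.card_le_card hsub).trans Finset.card_image_le
      -- no shattering for Gm
      have hnsGm : ∀ D ⊆ I', D.card = e → ∃ S ⊆ D,
          (Gm.filter (fun f => ∀ y ∈ D, f y = decide (y ∈ S))).card < m := by
        intro D hD hDc
        have hxD : x ∉ D := fun h => (Finset.mem_erase.mp (hD h)).1 rfl
        have hD'sub : insert x D ⊆ I :=
          Finset.insert_subset hx (hD.trans (Finset.erase_subset x I))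
        obtain ⟨S', hS', hlt⟩ := hns (insert x D) hD'sub
          (by rw [Finset.card_insert_of_notMem hxD, hDc])
        refine ⟨S'.erase x, ?_, ?_⟩
        · intro y hy
          rw [Finset.mem_erase] at hy
          rcases Finset.mem_insert.mp (hS' hy.2) with h | h
          · exact absurd h hy.1
          · exact h
        · apply lt_of_le_of_lt ?_ hlt
          set D' := insert x D with hD'
          set ψ : (Fin n → Bool) → (Fin n → Bool) :=
            fun g => if x ∈ S' then Function.update g x true else g with hψ
          apply Finset.card_le_card_of_injOn ψ
          · -- maps into
            intro g hg
            rw [Finset.mem_coe, Finset.mem_filter] at hg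
            obtain ⟨hgGm, hgP⟩ := hg
            rw [hGm, Finset.mem_inter] at hgGm
            obtain ⟨hg0, hg1⟩ := hgGm
            rw [hF0, Finset.mem_filter] at hg0
            have hgx : g x = false := hg0.2
            -- the companion with value true at x
            rw [Finset.mem_image] at hg1
            obtain ⟨f, hf1, hfg⟩ := hg1
            rw [hF1, Finset.mem_filter] at hf1
            have hupmem : Function.update g x true ∈ F := by
              have : Function.update g x true = f := by
                funext y
                by_cases hy : y = x
                · subst hy; simp [hf1.2]
                · rw [Function.update_of_ne hy, ← hfg, hresval f y hy]
              rw [this]; exact hf1.1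
            rw [Finset.mem_coe, Finset.mem_filter]
            by_cases hxS : x ∈ S'
            · rw [hψ]; simp only [if_pos hxS]
              refine ⟨hupmem, ?_⟩
              intro y hy
              rcases Finset.mem_insert.mp hy with h | h
              · subst h
                simp [hxS]
              · have hyx : y ≠ x := fun hh => hxD (hh ▸ h)
                rw [Function.update_of_ne hyx]
                have := hgP y h
                rw [this]
                have : (y ∈ S'.erase x) = (y ∈ S') := by
                  simp [Finset.mem_erase, hyx]
                simp only [this]
            · rw [hψ]; simp only [if_neg hxS]
              refine ⟨hg0.1, ?_⟩
              intro y hy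
              rcases Finset.mem_insert.mp hy with h | h
              · subst h
                simp [hgx, hxS]
              · have hyx : y ≠ x := fun hh => hxD (hh ▸ h)
                have := hgP y h
                rw [this]
                have : (y ∈ S'.erase x) = (y ∈ S') := by
                  simp [Finset.mem_erase, hyx]
                simp only [this]
          · -- injective
            intro g hg g' hg' hgg'
            rw [hψ] at hgg'
            by_cases hxS : x ∈ S'
            · simp only [if_pos hxS] at hgg'
              have hg2 : g ∈ Gm := (Finset.mem_filter.mp (Finset.mem_coe.mp hg)).1
              have hg2' : g' ∈ Gm := (Finset.mem_filter.mp (Finset.mem_coe.mp hg')).1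
              have hgx : g x = false := by
                have := hGmF0 hg2
                rw [hF0, Finset.mem_filter] at this; exact this.2
              have hgx' : g' x = false := by
                have := hGmF0 hg2'
                rw [hF0, Finset.mem_filter] at this; exact this.2
              funext y
              by_cases hy : y = x
              · subst hy; rw [hgx, hgx']
              · have := congrFun hgg' y
                rwa [Function.update_of_ne hy, Function.update_of_ne hy] at this
            · simpa only [if_neg hxS] using hgg'
      -- combine
      have hb1 := ih (e+1) I' hI' F' hsuppF' hnsF'
      have hb2 := ih e I' hI' Gm hsuppGm hnsGm
      calc F.card = F'.card + Gm.card := hcardkey.symm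
        _ ≤ (m-1) * ∑ i ∈ Finset.range (e+1+1), t.choose i
            + (m-1) * ∑ i ∈ Finset.range (e+1), t.choose i := Nat.add_le_add hb1 hb2
        _ = (m-1) * (∑ i ∈ Finset.range (e+1+1), t.choose i
            + ∑ i ∈ Finset.range (e+1), t.choose i) := by ring
        _ = (m-1) * ∑ i ∈ Finset.range (e+1+1), (t+1).choose i := by
            rw [sum_choose_succ t (e+1)]

/-- If `G` is a `U(d,d)`-free graph on `n` vertices, then the family of rows of its
adjacency matrix (neighborhood indicator vectors) has primal shatter function
`g(t) ≤ 10·t^d` for all `t > d`: every set `I` of `t > d` coordinates admits at most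
`10·t^d` distinct restrictions of rows to `I`. -/
theorem stmt_7 (n d : ℕ) (G : SimpleGraph (Fin n)) [DecidableRel G.Adj]
    (hfree : ¬ ContainsU G d d) :
    ∀ t : ℕ, d < t → ∀ I : Finset (Fin n), I.card = t →
      (Finset.image (fun u : Fin n => fun i : {x // x ∈ I} => decide (G.Adj u i.1))
        Finset.univ).card ≤ 10 * t ^ d := by
  intro t ht I hIt
  rcases Nat.eq_zero_or_pos d with hd0 | hd
  · exfalso
    apply hfree
    subst hd0
    exact ⟨⟨Fin.elim0, fun i => i.elim0⟩, ⟨fun p => p.2.elim0, fun p => p.2.elim0⟩,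
      fun i => i.elim0, fun i => i.elim0⟩
  set tr : Fin n → (Fin n → Bool) :=
    fun u => fun v => decide (v ∈ I) && decide (G.Adj u v) with htr
  set F : Finset (Fin n → Bool) := Finset.image tr Finset.univ with hF
  have hcard : (Finset.image (fun u : Fin n => fun i : {x // x ∈ I} => decide (G.Adj u i.1))
      Finset.univ).card ≤ F.card := by
    have himg : Finset.image (fun u : Fin n => fun i : {x // x ∈ I} => decide (G.Adj u i.1))
        Finset.univ = F.image (fun f => fun i : {x // x ∈ I} => f i.1) := by
      rw [hF, Finset.image_image]
      apply Finset.image_congr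
      intro u _
      funext i
      simp [htr, i.2]
    rw [himg]
    exact Finset.card_image_le
  refine hcard.trans ?_
  by_cases hsh : ∀ D ⊆ I, D.card = d → ∃ S ⊆ D,
      (F.filter (fun f => ∀ x ∈ D, f x = decide (x ∈ S))).card < 2*d
  · have hsupp : ∀ f ∈ F, ∀ y, y ∉ I → f y = false := by
      intro f hf y hy
      rw [hF, Finset.mem_image] at hf
      obtain ⟨u, _, rfl⟩ := hf
      simp [htr, hy]
    have h1 := sauer_mult n (2*d) (by omega) t d I hIt F hsupp hsh
    calc F.card ≤ (2*d - 1) * ∑ i ∈ Finset.range (d+1), t.choose i := h1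
      _ ≤ 10 * t ^ d := arith d t hd ht
  · exfalso
    apply hfree
    push_neg at hsh
    obtain ⟨D, hDI, hDc, hsh⟩ := hsh
    -- the a-side embedding
    set ea := D.orderIsoOfFin hDc with hea
    set amap : Fin d → Fin n := fun i => (ea i : Fin n) with hamap
    have hainj : Function.Injective amap := by
      intro i j h
      exact ea.injective (Subtype.ext h)
    have haD : ∀ i, amap i ∈ D := fun i => (ea i).2
    set Simg : Finset (Fin d) → Finset (Fin n) := fun S => S.image amap with hSimg
    have hSimgD : ∀ S, Simg S ⊆ D := by
      intro S y hy
      rw [hSimg, Finset.mem_image] at hy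
      obtain ⟨i, _, rfl⟩ := hy
      exact haD i
    have hmemSimg : ∀ i S, amap i ∈ Simg S ↔ i ∈ S := by
      intro i S
      rw [hSimg, Finset.mem_image]
      constructor
      · rintro ⟨j, hj, hji⟩
        rwa [← hainj hji]
      · intro hi; exact ⟨i, hi, rfl⟩
    have hSimginj : ∀ S S', Simg S = Simg S' → S = S' := by
      intro S S' h
      ext i
      rw [← hmemSimg i S, ← hmemSimg i S', h]
    -- the witness sets
    set W : Finset (Fin d) → Finset (Fin n) :=
      fun S => Finset.univ.filter (fun u => ∀ x ∈ D, tr u x = decide (x ∈ Simg S)) with hW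
    have hWcard : ∀ S, 2*d ≤ (W S).card := by
      intro S
      have h1 := hsh (Simg S) (hSimgD S)
      have h2 : F.filter (fun f => ∀ x ∈ D, f x = decide (x ∈ Simg S)) ⊆
          (W S).image tr := by
        intro f hf
        rw [Finset.mem_filter] at hf
        obtain ⟨hfF, hfP⟩ := hf
        rw [hF, Finset.mem_image] at hfF
        obtain ⟨u, _, rfl⟩ := hfF
        apply Finset.mem_image_of_mem
        rw [hW, Finset.mem_filter]
        exact ⟨Finset.mem_univ u, hfP⟩
      calc 2*d ≤ _ := h1
        _ ≤ ((W S).image tr).card := Finset.card_le_card h2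
        _ ≤ (W S).card := Finset.card_image_le
    have hW'card : ∀ S, d ≤ (W S \ D).card := by
      intro S
      have h1 := Finset.le_card_sdiff D (W S)
      have h2 := hWcard S
      omega
    choose T hT1 hT2 using fun S => Finset.exists_subset_card_eq (hW'card S)
    set bmap : Finset (Fin d) × Fin d → Fin n :=
      fun p => ((T p.1).orderIsoOfFin (hT2 p.1) p.2 : Fin n) with hbmap
    have hbT : ∀ p, bmap p ∈ T p.1 := fun p => ((T p.1).orderIsoOfFin (hT2 p.1) p.2).2
    have hbW : ∀ p, bmap p ∈ W p.1 :=
      fun p => (Finset.mem_sdiff.mp (hT1 p.1 (hbT p))).1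
    have hbD : ∀ p, bmap p ∉ D :=
      fun p => (Finset.mem_sdiff.mp (hT1 p.1 (hbT p))).2
    have hWdisj : ∀ S S' u, u ∈ W S → u ∈ W S' → S = S' := by
      intro S S' u hu hu'
      rw [hW, Finset.mem_filter] at hu hu'
      apply hSimginj
      ext y
      by_cases hy : y ∈ D
      · have h1 := hu.2 y hy
        have h2 := hu'.2 y hy
        rw [h1] at h2
        exact decide_eq_decide.mp h2
      · constructor
        · intro h; exact absurd (hSimgD S h) hy
        · intro h; exact absurd (hSimgD S' h) hy
    have hbinj : Function.Injective bmap := by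
      intro p q h
      have hS : p.1 = q.1 := hWdisj p.1 q.1 (bmap p) (hbW p) (h ▸ hbW q)
      obtain ⟨S, j⟩ := p
      obtain ⟨S', j'⟩ := q
      simp only at hS
      subst hS
      simp only [Prod.mk.injEq, true_and]
      have hj : ((T S).orderIsoOfFin (hT2 S)) j = ((T S).orderIsoOfFin (hT2 S)) j' :=
        Subtype.ext h
      exact ((T S).orderIsoOfFin (hT2 S)).injective hj
    refine ⟨⟨amap, hainj⟩, ⟨bmap, hbinj⟩, ?_, ?_⟩
    · intro i p h
      have h' : amap i = bmap p := h
      exact hbD p (h' ▸ haD i)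
    · intro i p
      have hu := hbW p
      rw [hW, Finset.mem_filter] at hu
      have h1 := hu.2 (amap i) (haD i)
      have h2 : decide (amap i ∈ I) = true := decide_eq_true (hDI (haD i))
      rw [htr] at h1
      simp only [h2, Bool.true_and] at h1
      have h3 : G.Adj (bmap p) (amap i) ↔ amap i ∈ Simg p.1 := decide_eq_decide.mp h1
      simp only [Function.Embedding.coeFn_mk]
      rw [G.adj_comm, h3, hmemSimg]
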